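/- Let U, V be nonnegative random variables, p ∈ (0,1), I ∼ Bernoulli(1-p). Then Z ∼ U + I·(Z - V)^+ (with U, V, I, Z independent on the right) holds if and only if Z ∼ U + W, where W := max_{0 ≤ k ≤ N} S_k, (S_k) is a random walk with i.i.d. increments distributed as U - V (with U, V independent), N is independent with N+1 geometric of parameter p, and U, W are independent. Moreover then W ∼ I·(Z - V)^+. -/

import Mathlib

open MeasureTheory ProbabilityTheory

noncomputable section

/-- real-valued cdf of a measure on ℝ -/
def rcdf (ν : Measure ℝ) (t : ℝ) : ℝ := (ν (Set.Iic t)).toReal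

lemma rcdf_mono (ν : Measure ℝ) [IsFiniteMeasure ν] : Monotone (rcdf ν) := fun a b hab =>
  ENNReal.toReal_mono (measure_ne_top _ _) (measure_mono (Set.Iic_subset_Iic.2 hab))

lemma rcdf_measurable (ν : Measure ℝ) [IsFiniteMeasure ν] : Measurable (rcdf ν) :=
  (rcdf_mono ν).measurable

lemma rcdf_nonneg (ν : Measure ℝ) (t : ℝ) : 0 ≤ rcdf ν t := ENNReal.toReal_nonneg

lemma rcdf_le_one (ν : Measure ℝ) [IsProbabilityMeasure ν] (t : ℝ) : rcdf ν t ≤ 1 := by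
  have := ENNReal.toReal_mono (by simp) (prob_le_one (μ := ν) (s := Set.Iic t))
  simpa [rcdf] using this

lemma measure_Iic_eq_ofReal_rcdf (ν : Measure ℝ) [IsFiniteMeasure ν] (t : ℝ) :
    ν (Set.Iic t) = ENNReal.ofReal (rcdf ν t) :=
  (ENNReal.ofReal_toReal (measure_ne_top _ _)).symm

lemma ext_rcdf {ν₁ ν₂ : Measure ℝ} [IsFiniteMeasure ν₁] [IsFiniteMeasure ν₂]
    (h : ∀ t, rcdf ν₁ t = rcdf ν₂ t) : ν₁ = ν₂ := by
  refine MeasureTheory.Measure.ext_of_Iic ν₁ ν₂ fun a => ?_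
  rw [measure_Iic_eq_ofReal_rcdf, measure_Iic_eq_ofReal_rcdf, h a]

lemma integrable_of_bound {α : Type*} [MeasurableSpace α] (μ : Measure α) [IsFiniteMeasure μ]
    (f : α → ℝ) (hf : AEStronglyMeasurable f μ) (C : ℝ) (hb : ∀ x, |f x| ≤ C) :
    Integrable f μ := by
  refine Integrable.mono' (integrable_const C) hf (ae_of_all _ fun x => ?_)
  simpa [Real.norm_eq_abs] using hb x

lemma rcdf_map_add {Ω : Type*} [MeasurableSpace Ω] (P : Measure Ω) [IsProbabilityMeasure P]
    (A B : Ω → ℝ) (hA : Measurable A) (hB : Measurable B) (h : IndepFun A B P) (t : ℝ) :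
    rcdf (Measure.map (fun ω => A ω + B ω) P) t
      = ∫ a, rcdf (Measure.map B P) (t - a) ∂(Measure.map A P) := by
  have hmA : IsProbabilityMeasure (Measure.map A P) := Measure.isProbabilityMeasure_map hA.aemeasurable
  have hmB : IsProbabilityMeasure (Measure.map B P) := Measure.isProbabilityMeasure_map hB.aemeasurable
  have hprod : Measure.map (fun ω => (A ω, B ω)) P = (Measure.map A P).prod (Measure.map B P) :=
    (indepFun_iff_map_prod_eq_prod_map_map hA.aemeasurable hB.aemeasurable).mp h
  have h1 : Measure.map (fun ω => A ω + B ω) P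
      = Measure.map (fun q : ℝ × ℝ => q.1 + q.2) ((Measure.map A P).prod (Measure.map B P)) := by
    rw [← hprod, Measure.map_map measurable_add (hA.prodMk hB)]
    rfl
  have h2 : ((Measure.map A P).prod (Measure.map B P)) ((fun q : ℝ × ℝ => q.1 + q.2) ⁻¹' Set.Iic t)
      = ∫⁻ a, (Measure.map B P) (Set.Iic (t - a)) ∂(Measure.map A P) := by
    rw [Measure.prod_apply (measurable_add measurableSet_Iic)]
    congr 1
    funext a
    congr 1
    ext b
    simp [Set.mem_preimage, le_sub_iff_add_le']
  have hint : Integrable (fun a => rcdf (Measure.map B P) (t - a)) (Measure.map A P) := by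
    refine integrable_of_bound _ _ ?_ 1 fun x => ?_
    · exact ((rcdf_measurable _).comp (measurable_const.sub measurable_id)).aestronglyMeasurable
    · rw [abs_of_nonneg (rcdf_nonneg _ _)]; exact rcdf_le_one _ _
  have h3 : ∫⁻ a, (Measure.map B P) (Set.Iic (t - a)) ∂(Measure.map A P)
      = ∫⁻ a, ENNReal.ofReal (rcdf (Measure.map B P) (t - a)) ∂(Measure.map A P) := by
    congr 1
    funext a
    exact measure_Iic_eq_ofReal_rcdf _ _
  rw [rcdf, h1, Measure.map_apply measurable_add measurableSet_Iic, h2, h3,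
    ← ofReal_integral_eq_lintegral_ofReal hint (ae_of_all _ fun a => rcdf_nonneg _ _),
    ENNReal.toReal_ofReal (integral_nonneg fun a => rcdf_nonneg _ _)]

lemma integral_map_add {Ω : Type*} [MeasurableSpace Ω] (P : Measure Ω) [IsProbabilityMeasure P]
    (A B : Ω → ℝ) (hA : Measurable A) (hB : Measurable B) (h : IndepFun A B P)
    (g : ℝ → ℝ) (hg : Measurable g) (hb : ∀ x, |g x| ≤ 1) :
    ∫ y, g y ∂(Measure.map (fun ω => A ω + B ω) P)
      = ∫ a, ∫ b, g (a + b) ∂(Measure.map B P) ∂(Measure.map A P) := by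
  have hmA : IsProbabilityMeasure (Measure.map A P) := Measure.isProbabilityMeasure_map hA.aemeasurable
  have hmB : IsProbabilityMeasure (Measure.map B P) := Measure.isProbabilityMeasure_map hB.aemeasurable
  have hprod : Measure.map (fun ω => (A ω, B ω)) P = (Measure.map A P).prod (Measure.map B P) :=
    (indepFun_iff_map_prod_eq_prod_map_map hA.aemeasurable hB.aemeasurable).mp h
  have h1 : Measure.map (fun ω => A ω + B ω) P
      = Measure.map (fun q : ℝ × ℝ => q.1 + q.2) ((Measure.map A P).prod (Measure.map B P)) := by
    rw [← hprod, Measure.map_map measurable_add (hA.prodMk hB)]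
    rfl
  rw [h1, integral_map measurable_add.aemeasurable hg.aestronglyMeasurable]
  exact integral_prod _ (integrable_of_bound _ _
    ((hg.comp (measurable_fst.add measurable_snd)).aestronglyMeasurable) 1 fun q => hb _)

end

noncomputable section
namespace Part2

/-- the contraction/uniqueness lemma for the Lindley fixed point equation -/
lemma fixed_point_unique (μX : Measure ℝ) [IsProbabilityMeasure μX] (p : ℝ)
    (hp0 : 0 < p) (hp1 : p < 1)
    (f g : ℝ → ℝ) (hfm : Measurable f) (hgm : Measurable g)
    (hf0 : ∀ t, 0 ≤ f t) (hf1 : ∀ t, f t ≤ 1) (hg0 : ∀ t, 0 ≤ g t) (hg1 : ∀ t, g t ≤ 1)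
    (hf : ∀ t, f t = if 0 ≤ t then p + (1 - p) * ∫ x, f (t - x) ∂μX else 0)
    (hg : ∀ t, g t = if 0 ≤ t then p + (1 - p) * ∫ x, g (t - x) ∂μX else 0) :
    f = g := by
  set d : ℝ → ℝ := fun t => f t - g t with hd
  have hdbound : ∀ t, |d t| ≤ 1 := fun t => abs_le.2 ⟨by have := hf0 t; have := hg1 t; simp [hd]; linarith,
    by have := hf1 t; have := hg0 t; simp [hd]; linarith⟩
  have hne : (Set.range fun t => |d t|).Nonempty := ⟨|d 0|, ⟨0, rfl⟩⟩
  have hbdd : BddAbove (Set.range fun t => |d t|) := by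
    refine ⟨1, ?_⟩
    rintro y ⟨t, rfl⟩
    exact hdbound t
  set c : ℝ := sSup (Set.range fun t => |d t|) with hc
  have hle : ∀ t, |d t| ≤ c := fun t => le_csSup hbdd ⟨t, rfl⟩
  have hc0 : 0 ≤ c := le_trans (abs_nonneg _) (hle 0)
  have hdm : Measurable d := hfm.sub hgm
  have key : ∀ t, |d t| ≤ (1 - p) * c := by
    intro t
    by_cases ht : 0 ≤ t
    · have hintf : Integrable (fun x => f (t - x)) μX :=
        integrable_of_bound _ _ ((hfm.comp (measurable_const.sub measurable_id)).aestronglyMeasurable)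
          1 fun x => abs_le.2 ⟨by have := hf0 (t - x); linarith, hf1 _⟩
      have hintg : Integrable (fun x => g (t - x)) μX :=
        integrable_of_bound _ _ ((hgm.comp (measurable_const.sub measurable_id)).aestronglyMeasurable)
          1 fun x => abs_le.2 ⟨by have := hg0 (t - x); linarith, hg1 _⟩
      have hdt : d t = (1 - p) * ∫ x, d (t - x) ∂μX := by
        have : ∫ x, d (t - x) ∂μX = (∫ x, f (t - x) ∂μX) - ∫ x, g (t - x) ∂μX :=
          integral_sub hintf hintg
        rw [hd]
        simp only
        rw [hf t, hg t, if_pos ht, if_pos ht, this]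
        ring
      have habs : |∫ x, d (t - x) ∂μX| ≤ c := by
        calc |∫ x, d (t - x) ∂μX| ≤ ∫ x, |d (t - x)| ∂μX := by
              simpa [Real.norm_eq_abs] using norm_integral_le_integral_norm (fun x => d (t - x)) (μ := μX)
          _ ≤ ∫ _x, c ∂μX := by
              refine integral_mono ((hintf.sub hintg).abs) (integrable_const c) fun x => hle _
          _ = c := by simp
      rw [hdt, abs_mul, abs_of_nonneg (by linarith : (0:ℝ) ≤ 1 - p)]
      exact mul_le_mul_of_nonneg_left habs (by linarith)
    · have : d t = 0 := by rw [hd]; simp only; rw [hf t, hg t, if_neg ht, if_neg ht]; ring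
      rw [this]
      simp only [abs_zero]
      have : (0:ℝ) ≤ 1 - p := by linarith
      positivity
  have hcle : c ≤ (1 - p) * c := by
    refine csSup_le hne ?_
    rintro y ⟨t, rfl⟩
    exact key t
  have hczero : c ≤ 0 := by nlinarith
  funext t
  have := hle t
  have : |d t| ≤ 0 := le_trans this hczero
  have hdt0 : d t = 0 := abs_eq_zero.1 (le_antisymm this (abs_nonneg _))
  have : f t - g t = 0 := hdt0
  linarith

end Part2
end
namespace Part3
open Finset

/-- running maximum of partial sums -/
noncomputable def pmax {α : Type*} (f : ℕ → α → ℝ) (n : ℕ) (ω : α) : ℝ :=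
  (Finset.range (n+1)).sup' Finset.nonempty_range_add_one (fun k => ∑ i ∈ Finset.range k, f i ω)

lemma pmax_nonneg {α : Type*} (f : ℕ → α → ℝ) (n : ℕ) (ω : α) : 0 ≤ pmax f n ω := by
  unfold pmax
  have h := Finset.le_sup' (fun k => ∑ i ∈ Finset.range k, f i ω)
    (Finset.mem_range.2 (Nat.succ_pos n))
  exact le_trans (le_of_eq (by simp)) h

lemma pmax_le_iff {α : Type*} (f : ℕ → α → ℝ) (n : ℕ) (ω : α) (t : ℝ) :
    pmax f n ω ≤ t ↔ ∀ k ∈ Finset.range (n+1), (∑ i ∈ Finset.range k, f i ω) ≤ t :=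
  Finset.sup'_le_iff _ _

lemma pmax_congr {α β : Type*} {f : ℕ → α → ℝ} {g : ℕ → β → ℝ} {n : ℕ} {ω : α} {ω' : β}
    (h : ∀ i < n, f i ω = g i ω') : pmax f n ω = pmax g n ω' := by
  unfold pmax
  refine Finset.sup'_congr _ rfl fun k hk => ?_
  refine Finset.sum_congr rfl fun i hi => ?_
  exact h i (lt_of_lt_of_le (Finset.mem_range.1 hi) (Nat.lt_succ_iff.1 (Finset.mem_range.1 hk)))

lemma pmax_zero {α : Type*} (f : ℕ → α → ℝ) (ω : α) : pmax f 0 ω = 0 := by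
  unfold pmax
  simp

lemma pmax_succ {α : Type*} (f : ℕ → α → ℝ) (n : ℕ) (ω : α) :
    pmax f (n+1) ω = (∑ i ∈ Finset.range (n+1), f i ω) ⊔ pmax f n ω := by
  unfold pmax
  exact (Finset.sup'_congr _ (Finset.range_add_one (n := n+1)) (fun x _ => rfl)).trans
    (Finset.sup'_insert _ _)

lemma pmax_measurable {α : Type*} [MeasurableSpace α] {f : ℕ → α → ℝ}
    (hf : ∀ i, Measurable (f i)) (n : ℕ) : Measurable (pmax f n) := by
  induction n with
  | zero => simpa [funext fun ω => pmax_zero f ω] using measurable_const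
  | succ n ih =>
      have : pmax f (n+1) = fun ω => (∑ i ∈ Finset.range (n+1), f i ω) ⊔ pmax f n ω :=
        funext fun ω => pmax_succ f n ω
      rw [this]
      exact (Finset.measurable_sum _ fun i _ => hf i).max ih

lemma pmax_succ_le_iff {α : Type*} (f : ℕ → α → ℝ) (n : ℕ) (ω : α) (t : ℝ) :
    pmax f (n+1) ω ≤ t ↔ 0 ≤ t ∧ f 0 ω + pmax (fun i => f (i+1)) n ω ≤ t := by
  rw [pmax_le_iff]
  constructor
  · intro h
    refine ⟨by simpa using h 0 (Finset.mem_range.2 (Nat.succ_pos _)), ?_⟩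
    rw [← le_sub_iff_add_le', pmax_le_iff]
    intro k hk
    have hk' : k + 1 ∈ Finset.range (n+2) := by
      simp only [Finset.mem_range] at hk ⊢; omega
    have := h (k+1) hk'
    rw [Finset.sum_range_succ'] at this
    linarith
  · rintro ⟨ht, h⟩
    rw [← le_sub_iff_add_le', pmax_le_iff] at h
    intro k hk
    match k with
    | 0 => simpa using ht
    | (k+1) =>
        have hk' : k ∈ Finset.range (n+1) := by
          simp only [Finset.mem_range] at hk ⊢; omega
        have := h k hk'
        rw [Finset.sum_range_succ']
        linarith

/-- iterates of the Lindley map applied to the point mass at 0 : cdf of the running maxima -/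
noncomputable def aSeq (μX : Measure ℝ) : ℕ → ℝ → ℝ
  | 0 => fun t => if 0 ≤ t then 1 else 0
  | (n+1) => fun t => if 0 ≤ t then ∫ x, aSeq μX n (t - x) ∂μX else 0

lemma aSeq_zero (μX : Measure ℝ) (t : ℝ) : aSeq μX 0 t = if 0 ≤ t then 1 else 0 := rfl

lemma aSeq_succ (μX : Measure ℝ) (n : ℕ) (t : ℝ) :
    aSeq μX (n+1) t = if 0 ≤ t then ∫ x, aSeq μX n (t - x) ∂μX else 0 := rfl

lemma aSeq_props (μX : Measure ℝ) [MeasureTheory.IsProbabilityMeasure μX] (n : ℕ) :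
    Monotone (aSeq μX n) ∧ (∀ t, 0 ≤ aSeq μX n t) ∧ (∀ t, aSeq μX n t ≤ 1) := by
  induction n with
  | zero =>
      refine ⟨fun a b hab => ?_, fun t => ?_, fun t => ?_⟩ <;> unfold aSeq <;>
        split_ifs <;> first | linarith | norm_num
  | succ n ih =>
      obtain ⟨ihm, ih0, ih1⟩ := ih
      have hmeas : Measurable (aSeq μX n) := ihm.measurable
      have hint : ∀ t : ℝ, MeasureTheory.Integrable (fun x => aSeq μX n (t - x)) μX := fun t =>
        integrable_of_bound _ _ ((hmeas.comp (measurable_const.sub measurable_id)).aestronglyMeasurable)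
          1 fun x => abs_le.2 ⟨by have := ih0 (t - x); linarith, ih1 _⟩
      refine ⟨fun a b hab => ?_, fun t => ?_, fun t => ?_⟩ <;> unfold aSeq
      · by_cases ha : 0 ≤ a
        · rw [if_pos ha, if_pos (le_trans ha hab)]
          exact MeasureTheory.integral_mono (hint a) (hint b) fun x => ihm (by linarith)
        · rw [if_neg ha]
          split_ifs with hb
          · exact MeasureTheory.integral_nonneg fun x => ih0 _
          · exact le_rfl
      · split_ifs
        · exact MeasureTheory.integral_nonneg fun x => ih0 _
        · exact le_rfl
      · split_ifs
        · calc ∫ x, aSeq μX n (t - x) ∂μX ≤ ∫ _x, (1:ℝ) ∂μX :=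
                MeasureTheory.integral_mono (hint t) (MeasureTheory.integrable_const 1) fun x => ih1 _
            _ = 1 := by simp
        · norm_num

lemma aSeq_measurable (μX : Measure ℝ) [MeasureTheory.IsProbabilityMeasure μX] (n : ℕ) :
    Measurable (aSeq μX n) := (aSeq_props μX n).1.measurable

end Part3
namespace Part4
open Part3

set_option maxHeartbeats 1000000

lemma law_pmax {Ω' : Type*} [MeasurableSpace Ω'] (P' : Measure Ω') [IsProbabilityMeasure P']
    (ξ : ℕ → Ω' → ℝ) (hξmeas : ∀ i, Measurable (ξ i))
    (hξindep : iIndepFun ξ P')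
    (μX : Measure ℝ) [IsProbabilityMeasure μX] (hξlaw : ∀ i, Measure.map (ξ i) P' = μX)
    (n : ℕ) : ∀ (j : ℕ) (t : ℝ),
    rcdf (Measure.map (pmax (fun i => ξ (j+1+i)) n) P') t = aSeq μX n t := by
  induction n with
  | zero =>
      intro j t
      have h0 : (pmax (fun i => ξ (j+1+i)) 0) = fun _ => (0:ℝ) := funext fun ω => pmax_zero _ _
      rw [h0, rcdf, Measure.map_apply measurable_const measurableSet_Iic]
      by_cases ht : (0:ℝ) ≤ t
      · rw [Set.preimage_const_of_mem (by simpa using ht)]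
        simp [aSeq, ht]
      · rw [Set.preimage_const_of_notMem (by simpa using ht)]
        simp [aSeq, ht]
  | succ n ih =>
      intro j t
      have hpm_meas : ∀ (j' : ℕ) (m : ℕ), Measurable (pmax (fun i => ξ (j'+1+i)) m) :=
        fun j' m => pmax_measurable (fun i => hξmeas _) m
      have hshift : ∀ ω, pmax (fun i => ξ (j+1+(i+1))) n ω = pmax (fun i => ξ ((j+1)+1+i)) n ω :=
        fun ω => pmax_congr fun i _ => by rw [show j+1+(i+1) = (j+1)+1+i by omega]
      -- independence of the first increment from the shifted running max
      have hind : IndepFun (ξ (j+1)) (pmax (fun i => ξ ((j+1)+1+i)) n) P' := by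
        classical
        set T : Finset ℕ := Finset.image (fun i => (j+1)+1+i) (Finset.range n) with hT
        have hdisj : Disjoint ({j+1} : Finset ℕ) T := by
          simp only [Finset.disjoint_left, Finset.mem_singleton, hT, Finset.mem_image,
            Finset.mem_range]
          rintro a rfl ⟨i, hi, hia⟩
          omega
        have hbig := hξindep.indepFun_finset {j+1} T hdisj hξmeas
        set φ : ({x // x ∈ ({j+1} : Finset ℕ)} → ℝ) → ℝ :=
          fun v => v ⟨j+1, Finset.mem_singleton_self _⟩ with hφdef
        set ψ : ({x // x ∈ T} → ℝ) → ℝ :=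
          pmax (fun i v => if h : (j+1)+1+i ∈ T then v ⟨_, h⟩ else 0) n with hψdef
        have hφ : Measurable φ := measurable_pi_apply _
        have hψ : Measurable ψ := by
          refine pmax_measurable (fun i => ?_) n
          by_cases h : (j+1)+1+i ∈ T
          · simp only [dif_pos h]
            exact measurable_pi_apply _
          · simp only [dif_neg h]
            exact measurable_const
        have hcomp := hbig.comp hφ hψ
        have e1 : (φ ∘ fun ω (i : {x // x ∈ ({j+1} : Finset ℕ)}) => ξ i ω) = ξ (j+1) := rfl
        have e2 : (ψ ∘ fun ω (i : {x // x ∈ T}) => ξ i ω)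
            = pmax (fun i => ξ ((j+1)+1+i)) n := by
          funext ω
          simp only [Function.comp_apply, hψdef]
          refine pmax_congr fun i hi => ?_
          have hmem : (j+1)+1+i ∈ T := Finset.mem_image.2 ⟨i, Finset.mem_range.2 hi, rfl⟩
          simp only [dif_pos hmem]
        rwa [e1, e2] at hcomp
      by_cases ht : (0:ℝ) ≤ t
      · have hset : (pmax (fun i => ξ (j+1+i)) (n+1)) ⁻¹' Set.Iic t
            = (fun ω => ξ (j+1) ω + pmax (fun i => ξ ((j+1)+1+i)) n ω) ⁻¹' Set.Iic t := by
          ext ω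
          simp only [Set.mem_preimage, Set.mem_Iic]
          rw [pmax_succ_le_iff]
          constructor
          · rintro ⟨-, h⟩
            rw [← hshift ω]
            simpa using h
          · intro h
            refine ⟨ht, ?_⟩
            rw [show j+1+0 = j+1 by omega]
            rw [hshift ω]
            exact h
        have hmeq : rcdf (Measure.map (pmax (fun i => ξ (j+1+i)) (n+1)) P') t
            = rcdf (Measure.map
                (fun ω => ξ (j+1) ω + pmax (fun i => ξ ((j+1)+1+i)) n ω) P') t := by
          rw [rcdf, rcdf, Measure.map_apply (hpm_meas j (n+1)) measurableSet_Iic,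
            Measure.map_apply (f := fun ω => ξ (j+1) ω + pmax (fun i => ξ ((j+1)+1+i)) n ω) ((hξmeas _).add (hpm_meas (j+1) n)) measurableSet_Iic, hset]
        rw [hmeq, rcdf_map_add P' _ _ (hξmeas _) (hpm_meas (j+1) n) hind t, hξlaw]
        have : ∀ a : ℝ, rcdf (Measure.map (pmax (fun i => ξ ((j+1)+1+i)) n) P') (t - a)
            = aSeq μX n (t - a) := fun a => ih (j+1) (t - a)
        rw [integral_congr_ae (ae_of_all _ fun a => this a)]
        rw [aSeq_succ, if_pos ht]
      · have hempty : (pmax (fun i => ξ (j+1+i)) (n+1)) ⁻¹' Set.Iic t = ∅ := by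
          ext ω
          simp only [Set.mem_preimage, Set.mem_Iic, Set.mem_empty_iff_false, iff_false, not_le]
          exact lt_of_lt_of_le (lt_of_not_ge ht) (pmax_nonneg _ _ _)
        rw [rcdf, Measure.map_apply (hpm_meas j (n+1)) measurableSet_Iic, hempty]
        rw [aSeq_succ, if_neg ht]
        simp

end Part4
namespace Part5
open Part3 Part4

set_option maxHeartbeats 1000000

lemma W_cdf {Ω' : Type*} [MeasurableSpace Ω'] (P' : Measure Ω') [IsProbabilityMeasure P']
    (ξ : ℕ → Ω' → ℝ) (hξmeas : ∀ i, Measurable (ξ i))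
    (hξindep : iIndepFun ξ P')
    (μX : Measure ℝ) [IsProbabilityMeasure μX] (hξlaw : ∀ i, Measure.map (ξ i) P' = μX)
    (N : Ω' → ℕ) (hNmeas : Measurable N)
    (p : ℝ) (hp0 : 0 < p) (hp1 : p < 1)
    (hNlaw : ∀ n : ℕ, P' {ω' | N ω' = n} = ENNReal.ofReal (p * (1 - p) ^ n))
    (hNξ : IndepFun (fun ω' => (fun i => ξ i ω')) N P')
    (W : Ω' → ℝ) (hWpm : ∀ ω, W ω = pmax (fun i => ξ (1+i)) (N ω) ω)
    (hWmeas : Measurable W) (t : ℝ) :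
    rcdf (Measure.map W P') t = ∑' n, (p * (1 - p) ^ n) * aSeq μX n t := by
  classical
  have hpm_meas : ∀ m : ℕ, Measurable (pmax (fun i => ξ (1+i)) m) :=
    fun m => pmax_measurable (fun i => hξmeas _) m
  -- independence of each running max from N
  have hindn : ∀ n : ℕ, IndepFun (pmax (fun i => ξ (1+i)) n) N P' := by
    intro n
    have hG : Measurable (pmax (fun i (v : ℕ → ℝ) => v (1+i)) n) :=
      pmax_measurable (fun i => measurable_pi_apply _) n
    have hcomp := hNξ.comp hG measurable_id
    have e : (pmax (fun i (v : ℕ → ℝ) => v (1+i)) n ∘ fun ω' => (fun i => ξ i ω'))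
        = pmax (fun i => ξ (1+i)) n := by
      funext ω
      simp only [Function.comp_apply]
      exact pmax_congr fun i _ => rfl
    rwa [e] at hcomp
  -- decompose the event according to the value of N
  have hunion : W ⁻¹' Set.Iic t
      = ⋃ n, ((pmax (fun i => ξ (1+i)) n) ⁻¹' Set.Iic t ∩ N ⁻¹' {n}) := by
    ext ω
    simp only [Set.mem_preimage, Set.mem_Iic, Set.mem_iUnion, Set.mem_inter_iff,
      Set.mem_singleton_iff]
    constructor
    · intro h
      exact ⟨N ω, by rwa [hWpm ω] at h, rfl⟩
    · rintro ⟨n, h, rfl⟩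
      rwa [hWpm ω]
  have hdisj : Pairwise (Function.onFun Disjoint
      (fun n => (pmax (fun i => ξ (1+i)) n) ⁻¹' Set.Iic t ∩ N ⁻¹' {n})) := by
    intro m n hmn
    refine Set.disjoint_left.2 ?_
    rintro ω ⟨-, h1⟩ ⟨-, h2⟩
    simp only [Set.mem_preimage, Set.mem_singleton_iff] at h1 h2
    exact hmn (h1.symm.trans h2)
  have hmeasn : ∀ n : ℕ, MeasurableSet
      ((pmax (fun i => ξ (1+i)) n) ⁻¹' Set.Iic t ∩ N ⁻¹' {n}) :=
    fun n => ((hpm_meas n) measurableSet_Iic).inter (hNmeas (measurableSet_singleton n))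
  have hsum : P' (W ⁻¹' Set.Iic t)
      = ∑' n, P' ((pmax (fun i => ξ (1+i)) n) ⁻¹' Set.Iic t ∩ N ⁻¹' {n}) := by
    rw [hunion, measure_iUnion hdisj hmeasn]
  have hterm : ∀ n : ℕ, P' ((pmax (fun i => ξ (1+i)) n) ⁻¹' Set.Iic t ∩ N ⁻¹' {n})
      = ENNReal.ofReal (aSeq μX n t * (p * (1 - p) ^ n)) := by
    intro n
    rw [(hindn n).measure_inter_preimage_eq_mul _ _ measurableSet_Iic
      (measurableSet_singleton n)]
    have h1 : P' ((pmax (fun i => ξ (1+i)) n) ⁻¹' Set.Iic t)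
        = ENNReal.ofReal (aSeq μX n t) := by
      rw [← Measure.map_apply (hpm_meas n) measurableSet_Iic,
        measure_Iic_eq_ofReal_rcdf]
      have := law_pmax P' ξ hξmeas hξindep μX hξlaw n 0 t
      have he : (fun i => ξ (0+1+i)) = (fun i => ξ (1+i)) := by
        funext i
        rw [show 0+1+i = 1+i by omega]
      rw [he] at this
      rw [this]
    have h2 : N ⁻¹' {n} = {ω' | N ω' = n} := by
      ext ω
      simp
    rw [h1, h2, hNlaw n, ← ENNReal.ofReal_mul (by
      have := (aSeq_props μX n).2.1 t
      exact this)]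
  rw [rcdf, Measure.map_apply hWmeas measurableSet_Iic, hsum]
  have : ∀ n : ℕ, P' ((pmax (fun i => ξ (1+i)) n) ⁻¹' Set.Iic t ∩ N ⁻¹' {n})
      = ENNReal.ofReal (aSeq μX n t * (p * (1 - p) ^ n)) := hterm
  rw [tsum_congr this, ENNReal.tsum_toReal_eq (fun n => ENNReal.ofReal_ne_top)]
  refine tsum_congr fun n => ?_
  rw [ENNReal.toReal_ofReal (by
    have h1 := (aSeq_props μX n).2.1 t
    have h1p : (0:ℝ) ≤ 1 - p := by linarith
    have h2 : (0:ℝ) ≤ p * (1-p)^n := by positivity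
    exact mul_nonneg h1 h2), mul_comm]

lemma series_fixed_point (μX : Measure ℝ) [IsProbabilityMeasure μX]
    (p : ℝ) (hp0 : 0 < p) (hp1 : p < 1) (t : ℝ) :
    (∑' n, (p * (1 - p) ^ n) * aSeq μX n t)
      = if 0 ≤ t then
          p + (1 - p) * ∫ x, (∑' n, (p * (1 - p) ^ n) * aSeq μX n (t - x)) ∂μX
        else 0 := by
  have h1p : (0:ℝ) ≤ 1 - p := by linarith
  have hc0 : ∀ n : ℕ, (0:ℝ) ≤ p * (1 - p) ^ n := fun n => by positivity
  have hcsum : Summable (fun n : ℕ => p * (1 - p) ^ n) :=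
    (summable_geometric_of_lt_one h1p (by linarith)).mul_left p
  have haux : ∀ s : ℝ, Summable (fun n : ℕ => (p * (1 - p) ^ n) * aSeq μX n s) := by
    intro s
    refine Summable.of_nonneg_of_le (fun n => mul_nonneg (hc0 n) ((aSeq_props μX n).2.1 s))
      (fun n => ?_) hcsum
    exact mul_le_of_le_one_right (hc0 n) ((aSeq_props μX n).2.2 s)
  by_cases ht : (0:ℝ) ≤ t
  · rw [if_pos ht]
    -- swap integral and sum
    have hswap : ∫ x, (∑' n, (p * (1 - p) ^ n) * aSeq μX n (t - x)) ∂μX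
        = ∑' n, ∫ x, (p * (1 - p) ^ n) * aSeq μX n (t - x) ∂μX := by
      refine integral_tsum (fun n => ?_) ?_
      · exact (((aSeq_measurable μX n).comp (measurable_const.sub measurable_id)).const_mul
          _).aestronglyMeasurable
      · have hb : ∀ n : ℕ, ∫⁻ x, ‖(p * (1 - p) ^ n) * aSeq μX n (t - x)‖₊ ∂μX
            ≤ ENNReal.ofReal (p * (1 - p) ^ n) := by
          intro n
          have : ∀ x : ℝ, (‖(p * (1 - p) ^ n) * aSeq μX n (t - x)‖₊ : ENNReal)
              ≤ ENNReal.ofReal (p * (1 - p) ^ n) := by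
            intro x
            rw [← enorm_eq_nnnorm, ← ofReal_norm]
            refine ENNReal.ofReal_le_ofReal ?_
            rw [Real.norm_eq_abs, abs_mul, abs_of_nonneg (hc0 n),
              abs_of_nonneg ((aSeq_props μX n).2.1 _)]
            exact mul_le_of_le_one_right (hc0 n) ((aSeq_props μX n).2.2 _)
          calc ∫⁻ x, ‖(p * (1 - p) ^ n) * aSeq μX n (t - x)‖₊ ∂μX
              ≤ ∫⁻ _x, ENNReal.ofReal (p * (1 - p) ^ n) ∂μX := lintegral_mono this
            _ = ENNReal.ofReal (p * (1 - p) ^ n) := by simp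
        refine ne_of_lt (lt_of_le_of_lt (ENNReal.tsum_le_tsum hb) ?_)
        rw [← ENNReal.ofReal_tsum_of_nonneg hc0 hcsum]
        exact ENNReal.ofReal_lt_top
    rw [hswap]
    have hstep : ∀ n : ℕ, ∫ x, (p * (1 - p) ^ n) * aSeq μX n (t - x) ∂μX
        = (p * (1 - p) ^ n) * aSeq μX (n+1) t := by
      intro n
      rw [integral_const_mul, aSeq_succ, if_pos ht]
    rw [tsum_congr hstep]
    -- reindex
    have hsum1 : Summable (fun n : ℕ => (p * (1 - p) ^ n) * aSeq μX n t) := haux t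
    rw [Summable.tsum_eq_zero_add hsum1]
    have h0 : (p * (1 - p) ^ 0) * aSeq μX 0 t = p := by
      rw [aSeq_zero, if_pos ht]
      ring
    rw [h0]
    congr 1
    rw [← tsum_mul_left]
    refine tsum_congr fun n => ?_
    ring_nf
  · rw [if_neg ht]
    have hz : ∀ n : ℕ, (p * (1 - p) ^ n) * aSeq μX n t = 0 := by
      intro n
      have : aSeq μX n t = 0 := by
        cases n with
        | zero => rw [aSeq_zero, if_neg ht]
        | succ m => rw [aSeq_succ, if_neg ht]
      rw [this, mul_zero]
    rw [tsum_congr hz]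
    exact tsum_zero

end Part5
namespace Part6

set_option maxHeartbeats 1000000

lemma cdf_bernoulli_mul {Ω : Type*} [MeasurableSpace Ω] (P : Measure Ω) [IsProbabilityMeasure P]
    (I Y : Ω → ℝ) (hImeas : Measurable I) (hYmeas : Measurable Y)
    (p : ℝ) (hp0 : 0 < p) (hp1 : p < 1)
    (hI1 : P {ω | I ω = 1} = ENNReal.ofReal (1 - p))
    (hI0 : P {ω | I ω = 0} = ENNReal.ofReal p)
    (hY0 : ∀ ω, 0 ≤ Y ω) (hind : IndepFun Y I P) (t : ℝ) :
    rcdf (Measure.map (fun ω => I ω * Y ω) P) t =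
      if 0 ≤ t then p + (1 - p) * rcdf (Measure.map Y P) t else 0 := by
  classical
  set E0 : Set Ω := I ⁻¹' {0} with hE0
  set E1 : Set Ω := I ⁻¹' {1} with hE1
  have hE0meas : MeasurableSet E0 := hImeas (measurableSet_singleton _)
  have hE1meas : MeasurableSet E1 := hImeas (measurableSet_singleton _)
  have hE0eq : E0 = {ω | I ω = 0} := by ext ω; simp [hE0]
  have hE1eq : E1 = {ω | I ω = 1} := by ext ω; simp [hE1]
  have hdisj : Disjoint E0 E1 := by
    refine Set.disjoint_left.2 ?_
    intro ω h0 h1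
    simp only [hE0, hE1, Set.mem_preimage, Set.mem_singleton_iff] at h0 h1
    rw [h0] at h1
    norm_num at h1
  have hfull : P (E0 ∪ E1) = 1 := by
    rw [measure_union hdisj hE1meas, hE0eq, hE1eq, hI0, hI1,
      ← ENNReal.ofReal_add (by linarith) (by linarith)]
    norm_num
  have hnull : P ((E0 ∪ E1)ᶜ) = 0 := by
    rw [measure_compl (hE0meas.union hE1meas) (measure_ne_top _ _), hfull, measure_univ]
    simp
  set A : Set Ω := (fun ω => I ω * Y ω) ⁻¹' Set.Iic t with hA
  have hAmeas : MeasurableSet A := (hImeas.mul hYmeas) measurableSet_Iic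
  have hsplit : P A = P (A ∩ E0) + P (A ∩ E1) := by
    rw [← measure_inter_conull hnull]
    have : A ∩ (E0 ∪ E1) = (A ∩ E0) ∪ (A ∩ E1) := Set.inter_union_distrib_left A E0 E1
    rw [this, measure_union (hdisj.mono Set.inter_subset_right Set.inter_subset_right)
      (hAmeas.inter hE1meas)]
  rw [rcdf, Measure.map_apply (f := fun ω => I ω * Y ω) (hImeas.mul hYmeas) measurableSet_Iic, ← hA, hsplit]
  by_cases ht : (0:ℝ) ≤ t
  · rw [if_pos ht]
    have h0 : A ∩ E0 = E0 := by
      refine Set.inter_eq_self_of_subset_right ?_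
      intro ω hω
      simp only [hE0, Set.mem_preimage, Set.mem_singleton_iff] at hω
      simp only [hA, Set.mem_preimage, Set.mem_Iic, hω, zero_mul]
      exact ht
    have h1 : A ∩ E1 = Y ⁻¹' Set.Iic t ∩ E1 := by
      ext ω
      simp only [hA, hE1, Set.mem_inter_iff, Set.mem_preimage, Set.mem_Iic,
        Set.mem_singleton_iff]
      constructor
      · rintro ⟨h, hI⟩
        rw [hI, one_mul] at h
        exact ⟨h, hI⟩
      · rintro ⟨h, hI⟩
        rw [hI, one_mul]
        exact ⟨h, rfl⟩
    rw [h0, h1, hind.measure_inter_preimage_eq_mul _ _ measurableSet_Iic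
      (measurableSet_singleton _), hE0eq, hI0]
    have hY : P (Y ⁻¹' Set.Iic t) = ENNReal.ofReal (rcdf (Measure.map Y P) t) := by
      rw [← Measure.map_apply hYmeas measurableSet_Iic]
      exact measure_Iic_eq_ofReal_rcdf _ _
    rw [hY, show I ⁻¹' {1} = {ω | I ω = 1} from by ext ω; simp, hI1, ← ENNReal.ofReal_mul (rcdf_nonneg _ _),
      ← ENNReal.ofReal_add (by linarith) (mul_nonneg (rcdf_nonneg _ _) (by linarith)),
      ENNReal.toReal_ofReal (by
        have := rcdf_nonneg (Measure.map Y P) t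
        nlinarith)]
    ring
  · rw [if_neg ht]
    have h0 : A ∩ E0 = ∅ := by
      ext ω
      simp only [hA, hE0, Set.mem_inter_iff, Set.mem_preimage, Set.mem_Iic,
        Set.mem_singleton_iff, Set.mem_empty_iff_false, iff_false, not_and]
      intro h hI
      rw [hI, zero_mul] at h
      exact ht h
    have h1 : A ∩ E1 = ∅ := by
      ext ω
      simp only [hA, hE1, Set.mem_inter_iff, Set.mem_preimage, Set.mem_Iic,
        Set.mem_singleton_iff, Set.mem_empty_iff_false, iff_false, not_and]
      intro h hI
      rw [hI, one_mul] at h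
      have := hY0 ω
      have := lt_of_not_ge ht
      linarith
    rw [h0, h1]
    simp

end Part6
open Part2 Part3 Part4 Part5 Part6 in
set_option maxHeartbeats 2000000 in
theorem stmt_10 {Ω Ω' : Type*} [MeasurableSpace Ω] [MeasurableSpace Ω']
    (P : Measure Ω) [IsProbabilityMeasure P] (P' : Measure Ω') [IsProbabilityMeasure P']
    (p : ℝ) (hp : p ∈ Set.Ioo (0 : ℝ) 1)
    (U V I Z : Ω → ℝ)
    (hUmeas : Measurable U) (hVmeas : Measurable V) (hImeas : Measurable I)
    (hZmeas : Measurable Z)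
    (hU : ∀ ω', 0 ≤ U ω') (hV : ∀ ω', 0 ≤ V ω')
    (hI1 : P {ω' | I ω' = 1} = ENNReal.ofReal (1 - p))
    (hI0 : P {ω' | I ω' = 0} = ENNReal.ofReal p)
    (hindep : iIndepFun ![U, V, I, Z] P)
    -- auxiliary space carrying the random walk with increments distributed as U - V,
    -- the geometric time N, and an independent copy U'' of U
    (ξ : ℕ → Ω' → ℝ) (hξmeas : ∀ i, Measurable (ξ i))
    (hξindep : iIndepFun ξ P')
    (hξlaw : ∀ i, Measure.map (ξ i) P' = Measure.map (fun ω' => U ω' - V ω') P)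
    (N : Ω' → ℕ) (hNmeas : Measurable N)
    (hNlaw : ∀ n : ℕ, P' {ω' | N ω' = n} = ENNReal.ofReal (p * (1 - p) ^ n))
    (hNξ : IndepFun (fun ω' => (fun i => ξ i ω')) N P')
    (S : ℕ → Ω' → ℝ) (hS0 : ∀ ω', S 0 ω' = 0)
    (hS : ∀ k ω', S (k + 1) ω' = S k ω' + ξ (k + 1) ω')
    (W : Ω' → ℝ)
    (hW : ∀ ω', W ω' =
      (Finset.range (N ω' + 1)).sup' Finset.nonempty_range_add_one (fun k => S k ω'))
    (U'' : Ω' → ℝ) (hU''meas : Measurable U'')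
    (hU''law : Measure.map U'' P' = Measure.map U P)
    (hU''W : IndepFun U'' W P') :
    (Measure.map Z P =
        Measure.map (fun ω' => U ω' + I ω' * max (Z ω' - V ω') 0) P ↔
      Measure.map Z P = Measure.map (fun ω' => U'' ω' + W ω') P') ∧
    (Measure.map Z P =
        Measure.map (fun ω' => U ω' + I ω' * max (Z ω' - V ω') 0) P →
      Measure.map W P' = Measure.map (fun ω' => I ω' * max (Z ω' - V ω') 0) P) := by
  classical
  obtain ⟨hp0, hp1⟩ := hp
  have hfmeas : ∀ i, Measurable (![U, V, I, Z] i) := by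
    intro i
    fin_cases i
    · exact hUmeas
    · exact hVmeas
    · exact hImeas
    · exact hZmeas
  have hYmeas : Measurable (fun ω => max (Z ω - V ω) 0) :=
    (hZmeas.sub hVmeas).max measurable_const
  have hWpmeas : Measurable (fun ω => I ω * max (Z ω - V ω) 0) := hImeas.mul hYmeas
  -- measurability of W
  have hSsum : ∀ k ω, S k ω = ∑ i ∈ Finset.range k, ξ (1+i) ω := by
    intro k
    induction k with
    | zero => intro ω; simpa using hS0 ω
    | succ k ih =>
        intro ω
        rw [hS k ω, ih ω, Finset.sum_range_succ, Nat.add_comm 1 k]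
  have hWpm : ∀ ω, W ω = pmax (fun i => ξ (1+i)) (N ω) ω := by
    intro ω
    rw [hW ω]
    unfold Part3.pmax
    exact Finset.sup'_congr _ rfl fun k _ => hSsum k ω
  have hWmeas : Measurable W := by
    have h1 : Measurable (fun q : Ω' × ℕ => pmax (fun i => ξ (1+i)) q.2 q.1) :=
      measurable_from_prod_countable_left fun n => pmax_measurable (fun i => hξmeas _) n
    have h2 : W = (fun q : Ω' × ℕ => pmax (fun i => ξ (1+i)) q.2 q.1) ∘ (fun ω => (ω, N ω)) :=
      funext fun ω => hWpm ω
    rw [h2]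
    exact h1.comp (measurable_id.prodMk hNmeas)
  -- probability measure instances
  haveI : IsProbabilityMeasure (Measure.map U P) := Measure.isProbabilityMeasure_map hUmeas.aemeasurable
  haveI : IsProbabilityMeasure (Measure.map Z P) := Measure.isProbabilityMeasure_map hZmeas.aemeasurable
  haveI : IsProbabilityMeasure (Measure.map (fun ω => U ω - V ω) P) :=
    Measure.isProbabilityMeasure_map (hUmeas.sub hVmeas).aemeasurable
  haveI : IsProbabilityMeasure (Measure.map (fun ω => -V ω) P) :=
    Measure.isProbabilityMeasure_map hVmeas.neg.aemeasurable
  haveI : IsProbabilityMeasure (Measure.map (fun ω => I ω * max (Z ω - V ω) 0) P) :=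
    Measure.isProbabilityMeasure_map hWpmeas.aemeasurable
  haveI : IsProbabilityMeasure (Measure.map W P') := Measure.isProbabilityMeasure_map hWmeas.aemeasurable
  haveI : IsProbabilityMeasure (Measure.map (fun ω => max (Z ω - V ω) 0) P) :=
    Measure.isProbabilityMeasure_map hYmeas.aemeasurable
  haveI : IsProbabilityMeasure (Measure.map (fun ω => Z ω - V ω) P) :=
    Measure.isProbabilityMeasure_map (hZmeas.sub hVmeas).aemeasurable
  -- independence facts on Ω
  have hmVZ : IndepFun (fun ω => -V ω) Z P := by
    have h := hindep.indepFun (show (1 : Fin 4) ≠ 3 by decide)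
    exact h.comp measurable_neg measurable_id
  have hmVU : IndepFun (fun ω => -V ω) U P := by
    have h := hindep.indepFun (show (1 : Fin 4) ≠ 0 by decide)
    exact h.comp measurable_neg measurable_id
  have hZV_I : IndepFun (fun ω => (Z ω, V ω)) I P :=
    hindep.indepFun_prodMk hfmeas 3 1 2 (by decide) (by decide)
  have hYI : IndepFun (fun ω => max (Z ω - V ω) 0) I P :=
    hZV_I.comp ((measurable_fst.sub measurable_snd).max measurable_const) measurable_id
  have hUWp : IndepFun U (fun ω => I ω * max (Z ω - V ω) 0) P := by
    have hbig := hindep.indepFun_finset {0} {1,2,3} (Finset.disjoint_left.2 (by decide)) hfmeas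
    have hφm : Measurable (fun v : ({x // x ∈ ({0} : Finset (Fin 4))} → ℝ) =>
        v ⟨0, by decide⟩) := measurable_pi_apply _
    have hψm : Measurable (fun v : ({x // x ∈ ({1,2,3} : Finset (Fin 4))} → ℝ) =>
        v ⟨2, by decide⟩ * max (v ⟨3, by decide⟩ - v ⟨1, by decide⟩) 0) :=
      (measurable_pi_apply (⟨2, by decide⟩ : {x // x ∈ ({1,2,3} : Finset (Fin 4))})).mul
        (((measurable_pi_apply (⟨3, by decide⟩ : {x // x ∈ ({1,2,3} : Finset (Fin 4))})).sub
          (measurable_pi_apply (⟨1, by decide⟩ : {x // x ∈ ({1,2,3} : Finset (Fin 4))}))).max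
            measurable_const)
    have hcomp := hbig.comp hφm hψm
    exact hcomp
  -- cdf transfer identities
  have hAcdf : ∀ t, rcdf (Measure.map (fun ω => U ω + I ω * max (Z ω - V ω) 0) P) t
      = ∫ u, rcdf (Measure.map (fun ω => I ω * max (Z ω - V ω) 0) P) (t - u)
          ∂(Measure.map U P) :=
    fun t => rcdf_map_add P U (fun ω => I ω * max (Z ω - V ω) 0) hUmeas hWpmeas hUWp t
  have hBcdf : ∀ t, rcdf (Measure.map (fun ω' => U'' ω' + W ω') P') t
      = ∫ u, rcdf (Measure.map W P') (t - u) ∂(Measure.map U P) := by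
    intro t
    have h := rcdf_map_add P' U'' W hU''meas hWmeas hU''W t
    rwa [hU''law] at h
  -- Fubini transfer for the increment law
  have hμXmap : Measure.map (fun ω => U ω - V ω) P
      = Measure.map (fun ω => (-V ω) + U ω) P := by
    congr 1
    funext ω
    ring
  have hconv : ∀ (F : ℝ → ℝ), Measurable F → (∀ x, 0 ≤ F x) → (∀ x, F x ≤ 1) → ∀ t : ℝ,
      ∫ y, F (t - y) ∂(Measure.map (fun ω => U ω - V ω) P)
        = ∫ x, (∫ u, F ((t - x) - u) ∂(Measure.map U P))
            ∂(Measure.map (fun ω => -V ω) P) := by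
    intro F hFm hF0 hF1 t
    rw [hμXmap, integral_map_add P (fun ω => -V ω) U hVmeas.neg hUmeas hmVU
      (fun y => F (t - y)) (hFm.comp (measurable_const.sub measurable_id))
      (fun y => abs_le.2 ⟨by have := hF0 (t - y); linarith, hF1 _⟩)]
    refine integral_congr_ae (ae_of_all _ fun x => ?_)
    refine integral_congr_ae (ae_of_all _ fun u => ?_)
    show F (t - (x + u)) = F (t - x - u)
    rw [show t - (x + u) = t - x - u by ring]
  -- the Lindley-type equation satisfied by the law of I * (Z - V)^+
  have hWpfix : ∀ (F : ℝ → ℝ), Measurable F → (∀ x, 0 ≤ F x) → (∀ x, F x ≤ 1) →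
      (∀ s, rcdf (Measure.map Z P) s = ∫ u, F (s - u) ∂(Measure.map U P)) →
      ∀ t, rcdf (Measure.map (fun ω => I ω * max (Z ω - V ω) 0) P) t
        = if 0 ≤ t then
            p + (1 - p) * ∫ x, F (t - x) ∂(Measure.map (fun ω => U ω - V ω) P)
          else 0 := by
    intro F hFm hF0 hF1 hFZ t
    rw [cdf_bernoulli_mul P I (fun ω => max (Z ω - V ω) 0) hImeas hYmeas p hp0 hp1 hI1 hI0
      (fun ω => le_max_right _ _) hYI t]
    by_cases ht : (0:ℝ) ≤ t
    · rw [if_pos ht, if_pos ht]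
      congr 1
      congr 1
      have h1 : rcdf (Measure.map (fun ω => max (Z ω - V ω) 0) P) t
          = rcdf (Measure.map (fun ω => Z ω - V ω) P) t := by
        have hset : (fun ω => max (Z ω - V ω) 0) ⁻¹' Set.Iic t
            = (fun ω => Z ω - V ω) ⁻¹' Set.Iic t := by
          ext ω
          simp only [Set.mem_preimage, Set.mem_Iic, max_le_iff]
          exact ⟨fun h => h.1, fun h => ⟨h, ht⟩⟩
        rw [rcdf, rcdf, Measure.map_apply hYmeas measurableSet_Iic,
          Measure.map_apply (f := fun ω => Z ω - V ω) (hZmeas.sub hVmeas) measurableSet_Iic, hset]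
      have h2 : rcdf (Measure.map (fun ω => Z ω - V ω) P) t
          = ∫ x, rcdf (Measure.map Z P) (t - x) ∂(Measure.map (fun ω => -V ω) P) := by
        have heq : (fun ω => Z ω - V ω) = (fun ω => (-V ω) + Z ω) := funext fun ω => by ring
        rw [heq]
        exact rcdf_map_add P (fun ω => -V ω) Z hVmeas.neg hZmeas hmVZ t
      rw [h1, h2, hconv F hFm hF0 hF1 t]
      refine integral_congr_ae (ae_of_all _ fun x => ?_)
      exact hFZ (t - x)
    · rw [if_neg ht, if_neg ht]
  -- the fixed-point equation satisfied by the law of W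
  have hWcdf : ∀ t, rcdf (Measure.map W P') t
      = ∑' n, (p * (1 - p) ^ n) * aSeq (Measure.map (fun ω => U ω - V ω) P) n t :=
    fun t => W_cdf P' ξ hξmeas hξindep (Measure.map (fun ω => U ω - V ω) P) hξlaw
      N hNmeas p hp0 hp1 hNlaw hNξ W hWpm hWmeas t
  have hWfix : ∀ t, rcdf (Measure.map W P') t
      = if 0 ≤ t then
          p + (1 - p) * ∫ x, rcdf (Measure.map W P') (t - x)
            ∂(Measure.map (fun ω => U ω - V ω) P)
        else 0 := by
    intro t
    rw [hWcdf t, series_fixed_point _ p hp0 hp1 t]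
    by_cases ht : (0:ℝ) ≤ t
    · rw [if_pos ht, if_pos ht]
      congr 2
      refine integral_congr_ae (ae_of_all _ fun x => ?_)
      exact (hWcdf (t - x)).symm
    · rw [if_neg ht, if_neg ht]
  -- forward direction
  have hforward : Measure.map Z P
        = Measure.map (fun ω' => U ω' + I ω' * max (Z ω' - V ω') 0) P →
      (Measure.map (fun ω => I ω * max (Z ω - V ω) 0) P = Measure.map W P')
      ∧ Measure.map Z P = Measure.map (fun ω' => U'' ω' + W ω') P' := by
    intro hA
    have hFZ : ∀ s, rcdf (Measure.map Z P) s
        = ∫ u, rcdf (Measure.map (fun ω => I ω * max (Z ω - V ω) 0) P) (s - u)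
            ∂(Measure.map U P) := by
      intro s
      rw [hA]
      exact hAcdf s
    have h1 := hWpfix (rcdf (Measure.map (fun ω => I ω * max (Z ω - V ω) 0) P))
      (rcdf_measurable _) (fun x => rcdf_nonneg _ _) (fun x => rcdf_le_one _ _) hFZ
    have h2 : rcdf (Measure.map (fun ω => I ω * max (Z ω - V ω) 0) P)
        = rcdf (Measure.map W P') :=
      fixed_point_unique (Measure.map (fun ω => U ω - V ω) P) p hp0 hp1 _ _
        (rcdf_measurable _) (rcdf_measurable _) (fun t => rcdf_nonneg _ _)
        (fun t => rcdf_le_one _ _) (fun t => rcdf_nonneg _ _) (fun t => rcdf_le_one _ _)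
        h1 hWfix
    have hmeq : Measure.map (fun ω => I ω * max (Z ω - V ω) 0) P = Measure.map W P' :=
      ext_rcdf fun t => congrFun h2 t
    refine ⟨hmeq, ?_⟩
    refine ext_rcdf fun s => ?_
    rw [hFZ s, hBcdf s]
    refine integral_congr_ae (ae_of_all _ fun u => ?_)
    exact congrFun h2 (s - u)
  -- backward direction
  have hbackward : Measure.map Z P = Measure.map (fun ω' => U'' ω' + W ω') P' →
      Measure.map Z P = Measure.map (fun ω' => U ω' + I ω' * max (Z ω' - V ω') 0) P := by
    intro hB
    have hFZ : ∀ s, rcdf (Measure.map Z P) s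
        = ∫ u, rcdf (Measure.map W P') (s - u) ∂(Measure.map U P) := by
      intro s
      rw [hB]
      exact hBcdf s
    have h1 := hWpfix (rcdf (Measure.map W P')) (rcdf_measurable _)
      (fun x => rcdf_nonneg _ _) (fun x => rcdf_le_one _ _) hFZ
    have h2 : ∀ t, rcdf (Measure.map (fun ω => I ω * max (Z ω - V ω) 0) P) t
        = rcdf (Measure.map W P') t := by
      intro t
      rw [h1 t, ← hWfix t]
    refine ext_rcdf fun s => ?_
    rw [hFZ s, hAcdf s]
    refine integral_congr_ae (ae_of_all _ fun u => ?_)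
    exact (h2 (s - u)).symm
  exact ⟨⟨fun hA => (hforward hA).2, hbackward⟩, fun hA => ((hforward hA).1).symm⟩
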